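/- arXiv:1305.2743 — 3 statements merged into one kernel-verified Lean document; each statement's English description precedes it below -/
import Mathlib

section
/- Let G be a finite simple graph and k a nonnegative integer. There exists a set F of at most k edges of G such that the graph G/F obtained by contracting all edges of F is bipartite if and only if there exists a set F' of edges of G such that G \ F' (the graph obtained by deleting the edges F') is bipartite and the rank of F' (the number of edges in a spanning forest of the subgraph formed by the edges F') is at most k. -/
/-- The set of vertices spanned by an edge set (endpoints of its edges). -/
def esupp {V : Type*} (F : Set (Sym2 V)) : Set V := {v | ∃ e ∈ F, v ∈ e}

/-- The number of connected components of the graph with edge set `F`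
that meet the vertex set `S`. -/
noncomputable def ncomp {V : Type*} (F : Set (Sym2 V)) (S : Set V) : ℕ :=
  Nat.card {c : (SimpleGraph.fromEdgeSet F).ConnectedComponent //
    ∃ v ∈ S, (SimpleGraph.fromEdgeSet F).connectedComponentMk v = c}

/-- The rank of an edge set `F`: number of vertices spanned by `F` minus the
number of connected components of the graph `G[F]` (vertex set `esupp F`, edge set `F`). -/
noncomputable def erank {V : Type*} (F : Set (Sym2 V)) : ℕ :=
  Nat.card (esupp F) - ncomp F (esupp F)

/-- The graph `G/F` obtained by contracting all edges of `F`: its vertices are the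
connected components of the graph with edge set `F`, two components adjacent if
`G` has an edge between them. -/
def contractE {V : Type*} (G : SimpleGraph V) (F : Set (Sym2 V)) :
    SimpleGraph ((SimpleGraph.fromEdgeSet F).ConnectedComponent) :=
  SimpleGraph.fromRel fun a b =>
    ∃ u v, G.Adj u v ∧ (SimpleGraph.fromEdgeSet F).connectedComponentMk u = a ∧
      (SimpleGraph.fromEdgeSet F).connectedComponentMk v = b

open SimpleGraph Set
set_option linter.unusedSectionVars false

namespace StmtAux

variable {V : Type*} [Fintype V]

lemma mem_esupp_of_adj {F : Set (Sym2 V)} {u v : V}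
    (h : (fromEdgeSet F).Adj u v) : u ∈ esupp F := by
  rw [fromEdgeSet_adj] at h
  exact ⟨s(u,v), h.1, by simp⟩

lemma mem_esupp_of_reachable {F : Set (Sym2 V)} {u v : V}
    (h : (fromEdgeSet F).Reachable u v) (huv : u ≠ v) : u ∈ esupp F := by
  obtain ⟨p⟩ := h
  cases p with
  | nil => exact absurd rfl huv
  | cons h _ => exact mem_esupp_of_adj h

/-- Transfer of connected components along a reachability-nondecreasing map. -/
def ccTrans {G G' : SimpleGraph V}
    (h : ∀ u v, G.Reachable u v → G'.Reachable u v) :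
    G.ConnectedComponent → G'.ConnectedComponent :=
  ConnectedComponent.lift G'.connectedComponentMk
    (fun u v p _ => ConnectedComponent.eq.mpr (h u v ⟨p⟩))

@[simp] lemma ccTrans_mk {G G' : SimpleGraph V}
    (h : ∀ u v, G.Reachable u v → G'.Reachable u v) (v : V) :
    ccTrans h (G.connectedComponentMk v) = G'.connectedComponentMk v := rfl

lemma ncomp_eq_ncard (F : Set (Sym2 V)) (S : Set V) :
    ncomp F S = ((fromEdgeSet F).connectedComponentMk '' S).ncard := by
  rw [← Nat.card_coe_set_eq]
  rfl

lemma ncard_image_mk_eq {G G' : SimpleGraph V}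
    (h : ∀ u v, G.Reachable u v ↔ G'.Reachable u v) (S : Set V) :
    (G.connectedComponentMk '' S).ncard = (G'.connectedComponentMk '' S).ncard := by
  have h1 : (ccTrans (fun u v hr => (h u v).mp hr)) '' (G.connectedComponentMk '' S)
      = G'.connectedComponentMk '' S := by
    rw [Set.image_image]; rfl
  have hinj : Set.InjOn (ccTrans (fun u v hr => (h u v).mp hr))
      (G.connectedComponentMk '' S) := by
    intro c hc c' hc' hcc
    obtain ⟨u, _, rfl⟩ := hc
    obtain ⟨v, _, rfl⟩ := hc'
    simp only [ccTrans_mk] at hcc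
    exact ConnectedComponent.eq.mpr ((h u v).mpr (ConnectedComponent.eq.mp hcc))
  rw [← h1, Set.ncard_image_of_injOn hinj]

lemma ncomp_le (F : Set (Sym2 V)) (S : Set V) : ncomp F S ≤ S.ncard := by
  rw [ncomp_eq_ncard]; exact Set.ncard_image_le (Set.toFinite S)

lemma erank_eq (F : Set (Sym2 V)) : erank F = (esupp F).ncard - ncomp F (esupp F) := by
  rw [erank, Nat.card_coe_set_eq]

lemma reach_insert_iff {F0 : Set (Sym2 V)} {a b : V} (hab : a ≠ b) (u v : V) :
    (fromEdgeSet (insert s(a,b) F0)).Reachable u v ↔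
      (fromEdgeSet F0).Reachable u v ∨
      ((fromEdgeSet F0).Reachable u a ∧ (fromEdgeSet F0).Reachable b v) ∨
      ((fromEdgeSet F0).Reachable u b ∧ (fromEdgeSet F0).Reachable a v) := by
  constructor
  · rintro ⟨p⟩
    induction p with
    | nil => exact Or.inl (Reachable.refl _)
    | @cons x y z hxy p ih =>
      rw [fromEdgeSet_adj, Set.mem_insert_iff] at hxy
      obtain ⟨hm | hm, hne⟩ := hxy
      · rcases Sym2.eq_iff.mp hm with ⟨rfl, rfl⟩ | ⟨rfl, rfl⟩
        · rcases ih with h | ⟨h1, h2⟩ | ⟨h1, h2⟩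
          · exact Or.inr (Or.inl ⟨Reachable.refl _, h⟩)
          · exact Or.inr (Or.inl ⟨Reachable.refl _, h2⟩)
          · exact Or.inl h2
        · rcases ih with h | ⟨h1, h2⟩ | ⟨h1, h2⟩
          · exact Or.inr (Or.inr ⟨Reachable.refl _, h⟩)
          · exact Or.inl h2
          · exact Or.inr (Or.inr ⟨Reachable.refl _, h2⟩)
      · have hadj : (fromEdgeSet F0).Adj x y := (fromEdgeSet_adj _).mpr ⟨hm, hne⟩
        rcases ih with h | ⟨h1, h2⟩ | ⟨h1, h2⟩
        · exact Or.inl (hadj.reachable.trans h)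
        · exact Or.inr (Or.inl ⟨hadj.reachable.trans h1, h2⟩)
        · exact Or.inr (Or.inr ⟨hadj.reachable.trans h1, h2⟩)
  · have hmono : fromEdgeSet F0 ≤ fromEdgeSet (insert s(a,b) F0) :=
      fromEdgeSet_mono (Set.subset_insert _ _)
    have hadj : (fromEdgeSet (insert s(a,b) F0)).Adj a b :=
      (fromEdgeSet_adj _).mpr ⟨Set.mem_insert _ _, hab⟩
    rintro (h | ⟨h1, h2⟩ | ⟨h1, h2⟩)
    · exact h.mono hmono
    · exact ((h1.mono hmono).trans hadj.reachable).trans (h2.mono hmono)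
    · exact ((h1.mono hmono).trans hadj.reachable.symm).trans (h2.mono hmono)

lemma reach_insert_eq {F0 : Set (Sym2 V)} {a b : V} (hab : a ≠ b)
    (h : (fromEdgeSet F0).Reachable a b) (u v : V) :
    (fromEdgeSet (insert s(a,b) F0)).Reachable u v ↔ (fromEdgeSet F0).Reachable u v := by
  rw [reach_insert_iff hab]
  constructor
  · rintro (h' | ⟨h1, h2⟩ | ⟨h1, h2⟩)
    exacts [h', (h1.trans h).trans h2, (h1.trans h.symm).trans h2]
  · exact Or.inl

/-- The natural map on components induced by inserting an edge. -/
def qmap (F0 : Set (Sym2 V)) (e : Sym2 V) :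
    (fromEdgeSet F0).ConnectedComponent → (fromEdgeSet (insert e F0)).ConnectedComponent :=
  ccTrans (fun _ _ h => h.mono (fromEdgeSet_mono (Set.subset_insert _ _)))

@[simp] lemma qmap_mk (F0 : Set (Sym2 V)) (e : Sym2 V) (v : V) :
    qmap F0 e ((fromEdgeSet F0).connectedComponentMk v)
      = (fromEdgeSet (insert e F0)).connectedComponentMk v := rfl

lemma qmap_image (F0 : Set (Sym2 V)) (e : Sym2 V) (S : Set V) :
    qmap F0 e '' ((fromEdgeSet F0).connectedComponentMk '' S)
      = (fromEdgeSet (insert e F0)).connectedComponentMk '' S := by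
  rw [Set.image_image]; rfl

lemma qmap_injOn {F0 : Set (Sym2 V)} {a b : V} (hab : a ≠ b) :
    Set.InjOn (qmap F0 s(a,b))
      (((fromEdgeSet F0).connectedComponentMk '' esupp F0) \
        {(fromEdgeSet F0).connectedComponentMk b}) := by
  rintro c ⟨⟨u, hu, rfl⟩, hcb⟩ c' ⟨⟨v, hv, rfl⟩, hcb'⟩ hq
  simp only [qmap_mk] at hq
  by_contra hne
  have hr1 : (fromEdgeSet (insert s(a,b) F0)).Reachable u v := ConnectedComponent.eq.mp hq
  rcases (reach_insert_iff hab u v).mp hr1 with h | ⟨h1, h2⟩ | ⟨h1, h2⟩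
  · exact hne (ConnectedComponent.eq.mpr h)
  · exact hcb' (Set.mem_singleton_iff.mpr (ConnectedComponent.eq.mpr h2.symm))
  · exact hcb (Set.mem_singleton_iff.mpr (ConnectedComponent.eq.mpr h1))

lemma mk_isolated {F0 : Set (Sym2 V)} {b : V} (hb : b ∉ esupp F0) :
    (fromEdgeSet F0).connectedComponentMk b ∉
      (fromEdgeSet F0).connectedComponentMk '' esupp F0 := by
  rintro ⟨u, hu, h⟩
  have hr : (fromEdgeSet F0).Reachable b u := (ConnectedComponent.eq.mp h).symm
  by_cases hbu : b = u
  · subst hbu; exact hb hu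
  · exact hb (mem_esupp_of_reachable hr hbu)

lemma qmap_injOn_full {F0 : Set (Sym2 V)} {a b : V} (hab : a ≠ b) (hb : b ∉ esupp F0) :
    Set.InjOn (qmap F0 s(a,b)) ((fromEdgeSet F0).connectedComponentMk '' esupp F0) := by
  have := qmap_injOn (F0 := F0) hab
  rwa [Set.diff_singleton_eq_self (mk_isolated hb)] at this

lemma esupp_insert_pair (F0 : Set (Sym2 V)) (a b : V) :
    esupp (insert s(a,b) F0) = insert a (insert b (esupp F0)) := by
  ext v
  simp only [esupp, Set.mem_setOf_eq, Set.mem_insert_iff, Sym2.mem_iff]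
  constructor
  · rintro ⟨e, he | he, hv⟩
    · subst he; rw [Sym2.mem_iff] at hv; rcases hv with rfl | rfl
      · exact Or.inl rfl
      · exact Or.inr (Or.inl rfl)
    · exact Or.inr (Or.inr ⟨e, he, hv⟩)
  · rintro (rfl | rfl | ⟨e, he, hv⟩)
    · exact ⟨s(v,b), Or.inl rfl, by simp⟩
    · exact ⟨s(a,v), Or.inl rfl, by simp⟩
    · exact ⟨e, Or.inr he, hv⟩

lemma mk1_notin {F0 : Set (Sym2 V)} {a b : V} (hab : a ≠ b)
    (ha : a ∉ esupp F0) (hb : b ∉ esupp F0) :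
    (fromEdgeSet (insert s(a,b) F0)).connectedComponentMk a ∉
      (fromEdgeSet (insert s(a,b) F0)).connectedComponentMk '' esupp F0 := by
  rintro ⟨u, hu, h⟩
  have hr : (fromEdgeSet (insert s(a,b) F0)).Reachable u a :=
    ConnectedComponent.eq.mp h
  have hau : a ≠ u := fun h' => ha (h' ▸ hu)
  have hbu : b ≠ u := fun h' => hb (h' ▸ hu)
  rcases (reach_insert_iff hab u a).mp hr with h' | ⟨h1, _⟩ | ⟨h1, _⟩
  · exact ha (mem_esupp_of_reachable h'.symm hau)
  · exact ha (mem_esupp_of_reachable h1.symm hau)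
  · exact hb (mem_esupp_of_reachable h1.symm hbu)

section Step

variable {F0 : Set (Sym2 V)} {a b : V}

lemma step_le_aux (hab : a ≠ b) (hcase : a ∈ esupp F0 ∨ b ∉ esupp F0) :
    (esupp F0).ncard + ncomp (insert s(a,b) F0) (esupp (insert s(a,b) F0)) ≤
      (esupp (insert s(a,b) F0)).ncard + ncomp F0 (esupp F0) := by
  classical
  have hmkab : (fromEdgeSet (insert s(a,b) F0)).connectedComponentMk a
      = (fromEdgeSet (insert s(a,b) F0)).connectedComponentMk b :=
    ConnectedComponent.eq.mpr
      ((fromEdgeSet_adj _).mpr ⟨Set.mem_insert _ _, hab⟩).reachable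
  rw [ncomp_eq_ncard, ncomp_eq_ncard, esupp_insert_pair,
    Set.image_insert_eq, Set.image_insert_eq, hmkab, Set.insert_idem]
  set mk1 := (fromEdgeSet (insert s(a,b) F0)).connectedComponentMk with hmk1
  set mk0 := (fromEdgeSet F0).connectedComponentMk with hmk0
  set S0 := esupp F0 with hS0
  set X := mk1 '' S0 with hXdef
  set A := mk0 '' S0 with hAdef
  have hX : X.ncard ≤ A.ncard := by
    rw [hXdef, ← qmap_image F0 s(a,b) S0]
    exact Set.ncard_image_le (Set.toFinite _)
  have hL1 : (insert (mk1 b) X).ncard ≤ X.ncard + 1 := Set.ncard_insert_le _ _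
  by_cases ha : a ∈ S0 <;> by_cases hb : b ∈ S0
  · rw [Set.insert_eq_of_mem hb, Set.insert_eq_of_mem ha,
      Set.insert_eq_of_mem (Set.mem_image_of_mem _ hb)]
    have hXX : (mk1 '' S0).ncard = X.ncard := rfl
    omega
  · have h2 : (insert a (insert b S0)).ncard = (insert b S0).ncard := by
      rw [Set.insert_eq_of_mem (Set.mem_insert_of_mem _ ha)]
    rw [h2, Set.ncard_insert_of_notMem hb (Set.toFinite _)]
    omega
  · exact absurd hcase (by push_neg; exact ⟨ha, hb⟩)
  · have hne : a ∉ insert b S0 := by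
      simp only [Set.mem_insert_iff]; push_neg; exact ⟨hab, ha⟩
    rw [Set.ncard_insert_of_notMem hne (Set.toFinite _),
      Set.ncard_insert_of_notMem hb (Set.toFinite _)]
    omega

lemma step_ge_aux (hab : a ≠ b) (hcase : a ∈ esupp F0 ∨ b ∉ esupp F0) :
    (esupp (insert s(a,b) F0)).ncard + ncomp F0 (esupp F0) ≤
      (esupp F0).ncard + ncomp (insert s(a,b) F0) (esupp (insert s(a,b) F0)) + 1 := by
  classical
  have hmkab : (fromEdgeSet (insert s(a,b) F0)).connectedComponentMk a
      = (fromEdgeSet (insert s(a,b) F0)).connectedComponentMk b :=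
    ConnectedComponent.eq.mpr
      ((fromEdgeSet_adj _).mpr ⟨Set.mem_insert _ _, hab⟩).reachable
  rw [ncomp_eq_ncard, ncomp_eq_ncard, esupp_insert_pair,
    Set.image_insert_eq, Set.image_insert_eq, hmkab, Set.insert_idem]
  set mk1 := (fromEdgeSet (insert s(a,b) F0)).connectedComponentMk with hmk1
  set mk0 := (fromEdgeSet F0).connectedComponentMk with hmk0
  set S0 := esupp F0 with hS0
  set X := mk1 '' S0 with hXdef
  set A := mk0 '' S0 with hAdef
  -- generally : A.ncard ≤ X.ncard + 1
  have hsub : A ⊆ insert (mk0 b) (A \ {mk0 b}) := by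
    intro x hx
    by_cases hxb : x = mk0 b
    · exact hxb ▸ Set.mem_insert _ _
    · exact Set.mem_insert_of_mem _ ⟨hx, hxb⟩
  have hdiff : (A \ {mk0 b}).ncard = (qmap F0 s(a,b) '' (A \ {mk0 b})).ncard :=
    (Set.ncard_image_of_injOn (qmap_injOn hab)).symm
  have himg_sub : qmap F0 s(a,b) '' (A \ {mk0 b}) ⊆ X := by
    rw [hXdef, ← qmap_image F0 s(a,b) S0]
    exact Set.image_mono Set.diff_subset
  have hA1 : A.ncard ≤ X.ncard + 1 := by
    calc A.ncard ≤ (insert (mk0 b) (A \ {mk0 b})).ncard :=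
          Set.ncard_le_ncard hsub (Set.toFinite _)
      _ ≤ (A \ {mk0 b}).ncard + 1 := Set.ncard_insert_le _ _
      _ ≤ X.ncard + 1 := by
          rw [hdiff]; exact Nat.add_le_add_right
            (Set.ncard_le_ncard himg_sub (Set.toFinite _)) 1
  have hXle : X.ncard ≤ (insert (mk1 b) X).ncard := Set.ncard_le_ncard_insert _ _
  by_cases ha : a ∈ S0 <;> by_cases hb : b ∈ S0
  · rw [Set.insert_eq_of_mem hb, Set.insert_eq_of_mem ha]
    omega
  · -- a ∈ S0, b ∉ S0 : full injectivity
    have hA0 : A.ncard ≤ X.ncard := by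
      rw [hAdef, ← Set.ncard_image_of_injOn (qmap_injOn_full hab hb),
        qmap_image F0 s(a,b) S0]
    have h2 : (insert a (insert b S0)).ncard = (insert b S0).ncard := by
      rw [Set.insert_eq_of_mem (Set.mem_insert_of_mem _ ha)]
    rw [h2, Set.ncard_insert_of_notMem hb (Set.toFinite _)]
    omega
  · exact absurd hcase (by push_neg; exact ⟨ha, hb⟩)
  · have hA0 : A.ncard ≤ X.ncard := by
      rw [hAdef, ← Set.ncard_image_of_injOn (qmap_injOn_full hab hb),
        qmap_image F0 s(a,b) S0]
    have hnew : mk1 b ∉ X := by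
      rw [← hmkab]
      exact mk1_notin hab ha hb
    have hXeq : (insert (mk1 b) X).ncard = X.ncard + 1 :=
      Set.ncard_insert_of_notMem hnew (Set.toFinite _)
    have hne : a ∉ insert b S0 := by
      simp only [Set.mem_insert_iff]; push_neg; exact ⟨hab, ha⟩
    rw [Set.ncard_insert_of_notMem hne (Set.toFinite _),
      Set.ncard_insert_of_notMem hb (Set.toFinite _)]
    omega

lemma step_lt_aux (hab : a ≠ b) (hnr : ¬ (fromEdgeSet F0).Reachable a b)
    (hcase : a ∈ esupp F0 ∨ b ∉ esupp F0) :
    (esupp F0).ncard + ncomp (insert s(a,b) F0) (esupp (insert s(a,b) F0)) + 1 ≤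
      (esupp (insert s(a,b) F0)).ncard + ncomp F0 (esupp F0) := by
  classical
  have hmkab : (fromEdgeSet (insert s(a,b) F0)).connectedComponentMk a
      = (fromEdgeSet (insert s(a,b) F0)).connectedComponentMk b :=
    ConnectedComponent.eq.mpr
      ((fromEdgeSet_adj _).mpr ⟨Set.mem_insert _ _, hab⟩).reachable
  rw [ncomp_eq_ncard, ncomp_eq_ncard, esupp_insert_pair,
    Set.image_insert_eq, Set.image_insert_eq, hmkab, Set.insert_idem]
  set mk1 := (fromEdgeSet (insert s(a,b) F0)).connectedComponentMk with hmk1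
  set mk0 := (fromEdgeSet F0).connectedComponentMk with hmk0
  set S0 := esupp F0 with hS0
  set X := mk1 '' S0 with hXdef
  set A := mk0 '' S0 with hAdef
  have hX : X.ncard ≤ A.ncard := by
    rw [hXdef, ← qmap_image F0 s(a,b) S0]
    exact Set.ncard_image_le (Set.toFinite _)
  by_cases ha : a ∈ S0 <;> by_cases hb : b ∈ S0
  · -- the interesting case : a, b ∈ S0, not reachable
    have hmk0ab : mk0 b ≠ mk0 a := by
      intro h
      exact hnr ((ConnectedComponent.eq.mp h).symm)
    have hXeq : X = qmap F0 s(a,b) '' (A \ {mk0 a}) := by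
      apply Set.Subset.antisymm
      · rw [hXdef, ← qmap_image F0 s(a,b) S0]
        rintro c ⟨x, hx, rfl⟩
        by_cases hxa : x = mk0 a
        · refine ⟨mk0 b, ⟨Set.mem_image_of_mem _ hb, hmk0ab⟩, ?_⟩
          rw [hxa]
          simp only [hmk0, qmap_mk, ← hmk1, hmkab]
        · exact ⟨x, ⟨hx, hxa⟩, rfl⟩
      · rw [hXdef, ← qmap_image F0 s(a,b) S0]
        exact Set.image_mono Set.diff_subset
    have h1 : X.ncard ≤ (A \ {mk0 a}).ncard := by
      rw [hXeq]; exact Set.ncard_image_le (Set.toFinite _)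
    have h2 : (A \ {mk0 a}).ncard + 1 = A.ncard :=
      Set.ncard_diff_singleton_add_one (Set.mem_image_of_mem _ ha) (Set.toFinite _)
    rw [Set.insert_eq_of_mem hb, Set.insert_eq_of_mem ha,
      Set.insert_eq_of_mem (Set.mem_image_of_mem _ hb)]
    have hXX : (mk1 '' S0).ncard = X.ncard := rfl
    omega
  · -- a ∈ S0, b ∉ S0
    have hmem : mk1 b ∈ X := by rw [← hmkab]; exact Set.mem_image_of_mem _ ha
    rw [Set.insert_eq_of_mem hmem]
    have h2 : (insert a (insert b S0)).ncard = (insert b S0).ncard := by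
      rw [Set.insert_eq_of_mem (Set.mem_insert_of_mem _ ha)]
    rw [h2, Set.ncard_insert_of_notMem hb (Set.toFinite _)]
    omega
  · exact absurd hcase (by push_neg; exact ⟨ha, hb⟩)
  · have hL1 : (insert (mk1 b) X).ncard ≤ X.ncard + 1 := Set.ncard_insert_le _ _
    have hne : a ∉ insert b S0 := by
      simp only [Set.mem_insert_iff]; push_neg; exact ⟨hab, ha⟩
    rw [Set.ncard_insert_of_notMem hne (Set.toFinite _),
      Set.ncard_insert_of_notMem hb (Set.toFinite _)]
    omega

lemma step_le (hab : a ≠ b) :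
    (esupp F0).ncard + ncomp (insert s(a,b) F0) (esupp (insert s(a,b) F0)) ≤
      (esupp (insert s(a,b) F0)).ncard + ncomp F0 (esupp F0) := by
  by_cases h : a ∈ esupp F0 ∨ b ∉ esupp F0
  · exact step_le_aux hab h
  · push_neg at h
    rw [show s(a,b) = s(b,a) from Sym2.eq_swap]
    exact step_le_aux hab.symm (Or.inl h.2)

lemma step_ge (hab : a ≠ b) :
    (esupp (insert s(a,b) F0)).ncard + ncomp F0 (esupp F0) ≤
      (esupp F0).ncard + ncomp (insert s(a,b) F0) (esupp (insert s(a,b) F0)) + 1 := by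
  by_cases h : a ∈ esupp F0 ∨ b ∉ esupp F0
  · exact step_ge_aux hab h
  · push_neg at h
    rw [show s(a,b) = s(b,a) from Sym2.eq_swap]
    exact step_ge_aux hab.symm (Or.inl h.2)

lemma step_lt (hab : a ≠ b) (hnr : ¬ (fromEdgeSet F0).Reachable a b) :
    (esupp F0).ncard + ncomp (insert s(a,b) F0) (esupp (insert s(a,b) F0)) + 1 ≤
      (esupp (insert s(a,b) F0)).ncard + ncomp F0 (esupp F0) := by
  by_cases h : a ∈ esupp F0 ∨ b ∉ esupp F0
  · exact step_lt_aux hab hnr h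
  · push_neg at h
    rw [show s(a,b) = s(b,a) from Sym2.eq_swap]
    exact step_lt_aux hab.symm (fun r => hnr r.symm) (Or.inl h.2)

end Step

lemma esupp_empty : esupp (∅ : Set (Sym2 V)) = ∅ := by
  ext v; simp [esupp]

lemma ncard_esupp_le (F : Set (Sym2 V)) (hF : ∀ e ∈ F, ¬ e.IsDiag) :
    (esupp F).ncard ≤ F.ncard + ncomp F (esupp F) := by
  refine Set.Finite.induction_on (motive := fun s _ => (∀ e ∈ s, ¬ e.IsDiag) →
      (esupp s).ncard ≤ s.ncard + ncomp s (esupp s)) F (Set.toFinite F) (fun _ => ?_) ?_ hF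
  · rw [esupp_empty]; simp
  · intro e F0 hnotin hfin ih hdiag
    obtain ⟨a, b, rfl⟩ : ∃ a b, e = s(a, b) := by
      induction e using Sym2.ind with | _ x y => exact ⟨x, y, rfl⟩
    have hab : a ≠ b := by
      have := hdiag s(a,b) (Set.mem_insert _ _)
      rwa [Sym2.mk_isDiag_iff] at this
    have hcard : (insert s(a,b) F0).ncard = F0.ncard + 1 :=
      Set.ncard_insert_of_notMem hnotin (Set.toFinite _)
    have ih' := ih (fun e he => hdiag e (Set.mem_insert_of_mem _ he))
    have step := step_ge (F0 := F0) hab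
    omega

lemma erank_le_union (F : Set (Sym2 V)) (D : Set (Sym2 V)) (hD : ∀ e ∈ D, ¬ e.IsDiag) :
    erank F ≤ erank (F ∪ D) := by
  refine Set.Finite.induction_on (motive := fun s _ => (∀ e ∈ s, ¬ e.IsDiag) →
      erank F ≤ erank (F ∪ s)) D (Set.toFinite D) (fun _ => ?_) ?_ hD
  · rw [Set.union_empty]
  · intro e D0 hnotin hfin ih hdiag
    obtain ⟨a, b, rfl⟩ : ∃ a b, e = s(a, b) := by
      induction e using Sym2.ind with | _ x y => exact ⟨x, y, rfl⟩
    have hab : a ≠ b := by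
      have := hdiag s(a,b) (Set.mem_insert _ _)
      rwa [Sym2.mk_isDiag_iff] at this
    have ih' := ih (fun e he => hdiag e (Set.mem_insert_of_mem _ he))
    refine le_trans ih' ?_
    rw [Set.union_insert]
    have step := step_le (F0 := F ∪ D0) hab
    have h1 := ncomp_le (F ∪ D0) (esupp (F ∪ D0))
    have h2 := ncomp_le (insert s(a,b) (F ∪ D0)) (esupp (insert s(a,b) (F ∪ D0)))
    rw [erank_eq, erank_eq]
    omega

lemma erank_mono {F F'' : Set (Sym2 V)} (h : F ⊆ F'') (hD : ∀ e ∈ F'', ¬ e.IsDiag) :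
    erank F ≤ erank F'' := by
  have := erank_le_union F (F'' \ F) (fun e he => hD e he.1)
  rwa [Set.union_diff_cancel h] at this

lemma erank_le_ncard (F : Set (Sym2 V)) (hd : ∀ e ∈ F, ¬ e.IsDiag) :
    erank F ≤ F.ncard := by
  have h1 := ncard_esupp_le F hd
  have h2 := ncomp_le F (esupp F)
  rw [erank_eq]
  omega

lemma reach_union_iff {F F' : Set (Sym2 V)}
    (hcl : ∀ u v, s(u,v) ∈ F' → (fromEdgeSet F).Reachable u v) (u v : V) :
    (fromEdgeSet (F ∪ F')).Reachable u v ↔ (fromEdgeSet F).Reachable u v := by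
  constructor
  · rintro ⟨p⟩
    induction p with
    | nil => exact Reachable.refl _
    | @cons x y z hxy p ih =>
      rw [fromEdgeSet_adj] at hxy
      rcases hxy.1 with hm | hm
      · exact ((fromEdgeSet_adj _).mpr ⟨hm, hxy.2⟩).reachable.trans ih
      · exact (hcl x y hm).trans ih
  · intro h; exact h.mono (fromEdgeSet_mono Set.subset_union_left)

lemma esupp_union (F F' : Set (Sym2 V)) : esupp (F ∪ F') = esupp F ∪ esupp F' := by
  ext v
  simp only [esupp, Set.mem_setOf_eq, Set.mem_union]
  constructor
  · rintro ⟨e, he | he, hv⟩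
    exacts [Or.inl ⟨e, he, hv⟩, Or.inr ⟨e, he, hv⟩]
  · rintro (⟨e, he, hv⟩ | ⟨e, he, hv⟩)
    exacts [⟨e, Or.inl he, hv⟩, ⟨e, Or.inr he, hv⟩]

lemma esupp_subset {F F' : Set (Sym2 V)} (hd : ∀ e ∈ F', ¬ e.IsDiag)
    (hcl : ∀ u v, s(u,v) ∈ F' → (fromEdgeSet F).Reachable u v) :
    esupp F' ⊆ esupp F := by
  rintro v ⟨e, he, hv⟩
  obtain ⟨w, rfl⟩ := Sym2.mem_iff_exists.mp hv
  have hvw : v ≠ w := by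
    have := hd _ he; rwa [Sym2.mk_isDiag_iff] at this
  exact mem_esupp_of_reachable (hcl v w he) hvw

lemma erank_union_closure {F F' : Set (Sym2 V)} (hd : ∀ e ∈ F', ¬ e.IsDiag)
    (hcl : ∀ u v, s(u,v) ∈ F' → (fromEdgeSet F).Reachable u v) :
    erank (F ∪ F') = erank F := by
  have hsupp : esupp (F ∪ F') = esupp F := by
    rw [esupp_union]
    exact Set.union_eq_self_of_subset_right (esupp_subset hd hcl)
  rw [erank_eq, erank_eq, hsupp, ncomp_eq_ncard, ncomp_eq_ncard,
    ncard_image_mk_eq (reach_union_iff hcl)]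

lemma erank_insert_redundant {F0 : Set (Sym2 V)} {a b : V} (hab : a ≠ b)
    (h : (fromEdgeSet F0).Reachable a b) :
    erank (insert s(a,b) F0) = erank F0 := by
  have ha : a ∈ esupp F0 := mem_esupp_of_reachable h hab
  have hb : b ∈ esupp F0 := mem_esupp_of_reachable h.symm hab.symm
  have hsupp : esupp (insert s(a,b) F0) = esupp F0 := by
    rw [esupp_insert_pair, Set.insert_eq_of_mem hb, Set.insert_eq_of_mem ha]
  rw [erank_eq, erank_eq, hsupp, ncomp_eq_ncard, ncomp_eq_ncard,
    ncard_image_mk_eq (reach_insert_eq hab h)]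

lemma forest_card_le : ∀ (n : ℕ) (F : Set (Sym2 V)), F.ncard = n →
    (∀ e ∈ F, ¬ e.IsDiag) →
    (∀ a b, s(a,b) ∈ F → ¬ (fromEdgeSet (F \ {s(a,b)})).Reachable a b) →
    F.ncard ≤ erank F := by
  intro n
  induction n using Nat.strong_induction_on with
  | _ n ih =>
    intro F hn hd hbr
    rcases Set.eq_empty_or_nonempty F with rfl | hne
    · simp
    · obtain ⟨e, he⟩ := hne
      obtain ⟨a, b, rfl⟩ : ∃ a b, e = s(a, b) := by
        induction e using Sym2.ind with | _ x y => exact ⟨x, y, rfl⟩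
      have hab : a ≠ b := by
        have := hd _ he; rwa [Sym2.mk_isDiag_iff] at this
      set F0 := F \ {s(a,b)} with hF0
      have hF : insert s(a,b) F0 = F := by
        rw [hF0, Set.insert_diff_singleton, Set.insert_eq_of_mem he]
      have hcard : F0.ncard + 1 = F.ncard :=
        Set.ncard_diff_singleton_add_one he (Set.toFinite _)
      have hnr : ¬ (fromEdgeSet F0).Reachable a b := hbr a b he
      have hd0 : ∀ e ∈ F0, ¬ e.IsDiag := fun e he' => hd e he'.1
      have hbr0 : ∀ x y, s(x,y) ∈ F0 → ¬ (fromEdgeSet (F0 \ {s(x,y)})).Reachable x y := by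
        intro x y hxy hr
        exact hbr x y hxy.1
          (hr.mono (fromEdgeSet_mono (Set.diff_subset_diff_left Set.diff_subset)))
      have ih0 : F0.ncard ≤ erank F0 := ih F0.ncard (by omega) F0 rfl hd0 hbr0
      have step := step_lt (F0 := F0) hab hnr
      have h1 := ncomp_le F0 (esupp F0)
      have h2 := ncomp_le (insert s(a,b) F0) (esupp (insert s(a,b) F0))
      rw [← hF, erank_eq]
      rw [erank_eq] at ih0
      have hc2 : (insert s(a,b) F0).ncard = F0.ncard + 1 := by rw [hF]; omega
      omega

lemma exists_forest : ∀ (n : ℕ) (F : Set (Sym2 V)), F.ncard = n →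
    (∀ e ∈ F, ¬ e.IsDiag) →
    ∃ T, T ⊆ F ∧ T.ncard ≤ erank F ∧
      (∀ u v, (fromEdgeSet T).Reachable u v ↔ (fromEdgeSet F).Reachable u v) := by
  intro n
  induction n using Nat.strong_induction_on with
  | _ n ih =>
    intro F hn hd
    by_cases hred : ∃ a b, a ≠ b ∧ s(a,b) ∈ F ∧ (fromEdgeSet (F \ {s(a,b)})).Reachable a b
    · obtain ⟨a, b, hab, he, hr⟩ := hred
      set F0 := F \ {s(a,b)} with hF0
      have hF : insert s(a,b) F0 = F := by
        rw [hF0, Set.insert_diff_singleton, Set.insert_eq_of_mem he]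
      have hcard : F0.ncard + 1 = F.ncard :=
        Set.ncard_diff_singleton_add_one he (Set.toFinite _)
      obtain ⟨T, hT1, hT2, hT3⟩ :=
        ih F0.ncard (by omega) F0 rfl (fun e he' => hd e he'.1)
      have herank : erank F = erank F0 := by
        rw [← hF]; exact erank_insert_redundant hab hr
      have hreq : ∀ u v, (fromEdgeSet F).Reachable u v ↔ (fromEdgeSet F0).Reachable u v := by
        intro u v; rw [← hF]; exact reach_insert_eq hab hr u v
      refine ⟨T, hT1.trans Set.diff_subset, ?_, ?_⟩
      · rw [herank]; exact hT2
      · intro u v; rw [hT3 u v, hreq u v]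
    · push_neg at hred
      refine ⟨F, Set.Subset.rfl, ?_, fun u v => Iff.rfl⟩
      refine forest_card_le F.ncard F rfl hd ?_
      intro a b hab hr
      have hne : a ≠ b := by
        have := hd _ hab; rwa [Sym2.mk_isDiag_iff] at this
      exact hred a b hne hab hr

end StmtAux

/-- `G` has a set of at most `k` edges whose contraction makes it
bipartite iff `G` has a bipartite modulator of rank at most `k`. -/
theorem stmt0 {V : Type*} [Fintype V] (G : SimpleGraph V) (k : ℕ) :
    (∃ F ⊆ G.edgeSet, Nat.card F ≤ k ∧ (contractE G F).Colorable 2) ↔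
    (∃ F' ⊆ G.edgeSet, (G.deleteEdges F').Colorable 2 ∧ erank F' ≤ k) := by
  classical
  constructor
  · rintro ⟨F, hFE, hFk, ⟨c⟩⟩
    rw [Nat.card_coe_set_eq] at hFk
    set mkF := (SimpleGraph.fromEdgeSet F).connectedComponentMk with hmkF
    set c' : V → Fin 2 := fun v => c (mkF v) with hc'
    set F' : Set (Sym2 V) :=
      {e | e ∈ G.edgeSet ∧ ∀ u v, e = s(u,v) → c' u = c' v} with hF'
    have hF'E : F' ⊆ G.edgeSet := fun e he => he.1
    have hd' : ∀ e ∈ F', ¬ e.IsDiag := fun e he => G.not_isDiag_of_mem_edgeSet he.1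
    have hdF : ∀ e ∈ F, ¬ e.IsDiag := fun e he => G.not_isDiag_of_mem_edgeSet (hFE he)
    have hdU : ∀ e ∈ F ∪ F', ¬ e.IsDiag := by
      rintro e (he | he)
      exacts [hdF e he, hd' e he]
    refine ⟨F', hF'E, ?_, ?_⟩
    · refine ⟨SimpleGraph.Coloring.mk c' ?_⟩
      intro u v huv
      rw [SimpleGraph.deleteEdges_adj] at huv
      intro heq
      refine huv.2 ⟨(SimpleGraph.mem_edgeSet G).mpr huv.1, ?_⟩
      intro x y hxy
      rcases Sym2.eq_iff.mp hxy with ⟨rfl, rfl⟩ | ⟨rfl, rfl⟩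
      · exact heq
      · exact heq.symm
    · have hcl : ∀ u v, s(u,v) ∈ F' → (SimpleGraph.fromEdgeSet F).Reachable u v := by
        intro u v huv
        have hadj : G.Adj u v := (SimpleGraph.mem_edgeSet G).mp huv.1
        have hcc : c' u = c' v := huv.2 u v rfl
        by_contra hnr
        have hne : mkF u ≠ mkF v := fun h => hnr (SimpleGraph.ConnectedComponent.eq.mp h)
        have hadj' : (contractE G F).Adj (mkF u) (mkF v) := by
          rw [contractE, SimpleGraph.fromRel_adj]
          exact ⟨hne, Or.inl ⟨u, v, hadj, rfl, rfl⟩⟩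
        exact c.valid hadj' hcc
      calc erank F' ≤ erank (F ∪ F') :=
            StmtAux.erank_mono Set.subset_union_right hdU
        _ = erank F := StmtAux.erank_union_closure hd' hcl
        _ ≤ F.ncard := StmtAux.erank_le_ncard F hdF
        _ ≤ k := hFk
  · rintro ⟨F', hF'E, ⟨c⟩, hrk⟩
    set M : Set (Sym2 V) := {e | e ∈ F' ∧ ∀ u v, e = s(u,v) → c u = c v} with hM
    have hMF' : M ⊆ F' := fun e he => he.1
    have hdF' : ∀ e ∈ F', ¬ e.IsDiag := fun e he => G.not_isDiag_of_mem_edgeSet (hF'E he)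
    have hdM : ∀ e ∈ M, ¬ e.IsDiag := fun e he => hdF' e (hMF' he)
    have hrkM : erank M ≤ k := le_trans (StmtAux.erank_mono hMF' hdF') hrk
    obtain ⟨T, hTM, hTc, hTr⟩ := StmtAux.exists_forest M.ncard M rfl hdM
    have hTE : T ⊆ G.edgeSet := fun e he => hF'E (hMF' (hTM he))
    refine ⟨T, hTE, ?_, ?_⟩
    · rw [Nat.card_coe_set_eq]
      exact le_trans hTc hrkM
    · have hconst : ∀ (u v : V) (p : (SimpleGraph.fromEdgeSet T).Walk u v),
          p.IsPath → c u = c v := by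
        intro u v p hp
        clear hp
        induction p with
        | nil => rfl
        | @cons x y z hxy p ih =>
          rw [SimpleGraph.fromEdgeSet_adj] at hxy
          exact ((hTM hxy.1).2 x y rfl).trans ih
      set χ : (SimpleGraph.fromEdgeSet T).ConnectedComponent → Fin 2 :=
        SimpleGraph.ConnectedComponent.lift c hconst with hχ
      have key : ∀ x y, x ≠ y →
          (∃ u v, G.Adj u v ∧ (SimpleGraph.fromEdgeSet T).connectedComponentMk u = x ∧
            (SimpleGraph.fromEdgeSet T).connectedComponentMk v = y) → χ x ≠ χ y := by
        rintro x y hxy ⟨u, v, hadj, rfl, rfl⟩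
        simp only [hχ, SimpleGraph.ConnectedComponent.lift_mk]
        intro hcc
        by_cases hFm : s(u,v) ∈ F'
        · have hMm : s(u,v) ∈ M := by
            refine ⟨hFm, ?_⟩
            intro x' y' hxy'
            rcases Sym2.eq_iff.mp hxy' with ⟨rfl, rfl⟩ | ⟨rfl, rfl⟩
            · exact hcc
            · exact hcc.symm
          have hrM : (SimpleGraph.fromEdgeSet M).Reachable u v :=
            ((SimpleGraph.fromEdgeSet_adj _).mpr ⟨hMm, hadj.ne⟩).reachable
          exact hxy (SimpleGraph.ConnectedComponent.eq.mpr ((hTr u v).mpr hrM))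
        · have hdel : (G.deleteEdges F').Adj u v := by
            rw [SimpleGraph.deleteEdges_adj]; exact ⟨hadj, hFm⟩
          exact (c.valid hdel) hcc
      refine ⟨SimpleGraph.Coloring.mk χ ?_⟩
      intro x y hxy
      rw [contractE, SimpleGraph.fromRel_adj] at hxy
      rcases hxy.2 with h | h
      · exact key x y hxy.1 h
      · exact (key y x (Ne.symm hxy.1) h).symm
end

section
/- Let G be a finite simple graph and F a set of edges of G such that G/F (the graph obtained by contracting the edges of F) is bipartite. Let F' be the set of edges of G whose two endpoints lie in the same connected component of the graph G[F]. Then r(F') ≤ |F| and G \ F' is bipartite. -/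
open SimpleGraph

section helpers

variable {V : Type*}

/-- A vertex not spanned by `F` is isolated in `fromEdgeSet F`. -/
lemma isolated_reach {F : Set (Sym2 V)} {v w : V}
    (hv : v ∉ esupp F) (h : (SimpleGraph.fromEdgeSet F).Reachable v w) : v = w := by
  obtain ⟨p⟩ := h
  cases p with
  | nil => rfl
  | cons h' p' =>
    rw [SimpleGraph.fromEdgeSet_adj] at h'
    exact absurd ⟨_, h'.1, Sym2.mem_mk_left _ _⟩ hv

lemma reach_of_adj_reach {G G' : SimpleGraph V}
    (h : ∀ a b, G'.Adj a b → G.Reachable a b) {x y : V} (hr : G'.Reachable x y) :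
    G.Reachable x y := by
  obtain ⟨p⟩ := hr
  induction p with
  | nil => exact Reachable.refl _
  | cons h' _ ih => exact (h _ _ h').trans ih

lemma reach_insert_edge {F : Set (Sym2 V)} {u v x y : V}
    (h : (fromEdgeSet (insert s(u,v) F)).Reachable x y) :
    (fromEdgeSet F).Reachable x y ∨
      ((fromEdgeSet F).Reachable x u ∧ (fromEdgeSet F).Reachable v y) ∨
      ((fromEdgeSet F).Reachable x v ∧ (fromEdgeSet F).Reachable u y) := by
  obtain ⟨p⟩ := h
  induction p with
  | nil => exact Or.inl (Reachable.refl _)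
  | @cons a b c h' p' ih =>
    rw [fromEdgeSet_adj, Set.mem_insert_iff] at h'
    obtain ⟨he | he, hne⟩ := h'
    · rw [Sym2.eq_iff] at he
      rcases he with ⟨rfl, rfl⟩ | ⟨rfl, rfl⟩
      · rcases ih with h1 | ⟨h1, h2⟩ | ⟨h1, h2⟩
        · exact Or.inr (Or.inl ⟨Reachable.refl _, h1⟩)
        · exact Or.inr (Or.inl ⟨Reachable.refl _, h2⟩)
        · exact Or.inl h2
      · rcases ih with h1 | ⟨h1, h2⟩ | ⟨h1, h2⟩
        · exact Or.inr (Or.inr ⟨Reachable.refl _, h1⟩)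
        · exact Or.inl h2
        · exact Or.inr (Or.inr ⟨Reachable.refl _, h2⟩)
    · have hab : (fromEdgeSet F).Reachable a b :=
        ((SimpleGraph.fromEdgeSet_adj _).mpr ⟨he, hne⟩).reachable
      rcases ih with h1 | ⟨h1, h2⟩ | ⟨h1, h2⟩
      · exact Or.inl (hab.trans h1)
      · exact Or.inr (Or.inl ⟨hab.trans h1, h2⟩)
      · exact Or.inr (Or.inr ⟨hab.trans h1, h2⟩)

lemma ncomp_mono_S [Finite V] (F : Set (Sym2 V)) {S T : Set V} (h : S ⊆ T) :
    ncomp F S ≤ ncomp F T := by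
  apply Nat.card_le_card_of_injective
    (fun c => (⟨c.1, c.2.imp fun v hv => ⟨h hv.1, hv.2⟩⟩ :
      {c : (SimpleGraph.fromEdgeSet F).ConnectedComponent //
        ∃ v ∈ T, (SimpleGraph.fromEdgeSet F).connectedComponentMk v = c}))
  intro c c' hcc
  cases c; cases c'
  simpa using hcc

lemma esupp_insert {F : Set (Sym2 V)} {u v : V} :
    esupp (insert s(u,v) F) = insert u (insert v (esupp F)) := by
  ext w
  simp only [esupp, Set.mem_setOf_eq, Set.mem_insert_iff]
  constructor
  · rintro ⟨e, he | he, hw⟩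
    · subst he
      rcases Sym2.mem_iff.mp hw with rfl | rfl
      · exact Or.inl rfl
      · exact Or.inr (Or.inl rfl)
    · exact Or.inr (Or.inr ⟨e, he, hw⟩)
  · rintro (rfl | rfl | ⟨e, he, hw⟩)
    · exact ⟨s(w,v), Or.inl rfl, Sym2.mem_mk_left _ _⟩
    · exact ⟨s(u,w), Or.inl rfl, Sym2.mem_mk_right _ _⟩
    · exact ⟨e, Or.inr he, hw⟩

/-- The canonical map of components together with its almost-injectivity. -/
lemma exists_q {F : Set (Sym2 V)} {u v : V} :
    ∃ q : (fromEdgeSet F).ConnectedComponent →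
        (fromEdgeSet (insert s(u,v) F)).ConnectedComponent,
      (∀ w, q ((fromEdgeSet F).connectedComponentMk w) =
          (fromEdgeSet (insert s(u,v) F)).connectedComponentMk w) ∧
      ∀ c c', q c = q c' → c = c' ∨
        (c = (fromEdgeSet F).connectedComponentMk u ∧
          c' = (fromEdgeSet F).connectedComponentMk v) ∨
        (c = (fromEdgeSet F).connectedComponentMk v ∧
          c' = (fromEdgeSet F).connectedComponentMk u) := by
  have hle : fromEdgeSet F ≤ fromEdgeSet (insert s(u,v) F) :=
    fromEdgeSet_mono (Set.subset_insert _ _)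
  refine ⟨ConnectedComponent.lift
      (fun w => (fromEdgeSet (insert s(u,v) F)).connectedComponentMk w)
      (fun a b p _ => ConnectedComponent.sound (p.reachable.mono hle)),
    fun _ => rfl, ?_⟩
  intro c c'
  refine ConnectedComponent.ind₂ (fun x y h => ?_) c c'
  rcases reach_insert_edge (ConnectedComponent.eq.mp h) with h1 | ⟨h1, h2⟩ | ⟨h1, h2⟩
  · exact Or.inl (ConnectedComponent.sound h1)
  · exact Or.inr (Or.inl ⟨ConnectedComponent.sound h1, (ConnectedComponent.sound h2).symm⟩)
  · exact Or.inr (Or.inr ⟨ConnectedComponent.sound h1, (ConnectedComponent.sound h2).symm⟩)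

/-- A component with a witness in `esupp F` is not the component of a vertex
outside `esupp F`. -/
lemma wit_ne {F : Set (Sym2 V)} {w z : V} (hz : z ∉ esupp F) (hw : w ∈ esupp F) :
    (fromEdgeSet F).connectedComponentMk w ≠ (fromEdgeSet F).connectedComponentMk z := by
  intro h
  have hzw : z = w := isolated_reach hz (ConnectedComponent.eq.mp h).symm
  cases hzw
  exact hz hw

lemma esupp_sub_insert {F : Set (Sym2 V)} {e : Sym2 V} : esupp F ⊆ esupp (insert e F) :=
  fun _ ⟨e', he', hw⟩ => ⟨e', Set.mem_insert_of_mem _ he', hw⟩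

lemma step_case1 [Fintype V] {F : Set (Sym2 V)} {u v : V}
    (hu : u ∈ esupp F) (hv : v ∈ esupp F) :
    ncomp F (esupp F) ≤ ncomp (insert s(u,v) F) (esupp (insert s(u,v) F)) + 1 := by
  classical
  obtain ⟨q, hq, hqinj⟩ := exists_q (F := F) (u := u) (v := v)
  have key : ncomp F (esupp F) ≤
      Nat.card ({c : (fromEdgeSet (insert s(u,v) F)).ConnectedComponent //
        ∃ w ∈ esupp (insert s(u,v) F),
          (fromEdgeSet (insert s(u,v) F)).connectedComponentMk w = c} ⊕ Unit) := by
    refine Nat.card_le_card_of_injective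
      (fun c => if c.1 = (fromEdgeSet F).connectedComponentMk v then Sum.inr Unit.unit
        else Sum.inl ⟨q c.1, by
          obtain ⟨w, hw, hmk⟩ := c.2
          exact ⟨w, esupp_sub_insert hw, by rw [← hmk, hq]⟩⟩) ?_
    intro c c' hcc
    by_cases h1 : c.1 = (fromEdgeSet F).connectedComponentMk v <;>
      by_cases h2 : c'.1 = (fromEdgeSet F).connectedComponentMk v <;>
      simp only [h1, h2, if_pos, if_neg, if_true, if_false] at hcc
    · exact Subtype.ext (h1.trans h2.symm)
    · simp at hcc
    · simp at hcc
    · have hq12 : q c.1 = q c'.1 := by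
        have := congrArg (fun x => match x with
          | Sum.inl b => b.1
          | Sum.inr _ => q c.1) hcc
        simpa using this
      rcases hqinj _ _ hq12 with h | ⟨ha, hb⟩ | ⟨ha, hb⟩
      · exact Subtype.ext h
      · exact absurd hb h2
      · exact absurd ha h1
  rwa [Nat.card_sum, Nat.card_eq_fintype_card (α := Unit), Fintype.card_punit] at key

lemma step_case2 [Fintype V] {F : Set (Sym2 V)} {u v : V}
    (hv : v ∉ esupp F) :
    ncomp F (esupp F) ≤ ncomp (insert s(u,v) F) (esupp (insert s(u,v) F)) := by
  classical
  obtain ⟨q, hq, hqinj⟩ := exists_q (F := F) (u := u) (v := v)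
  refine Nat.card_le_card_of_injective
    (fun c => (⟨q c.1, by
        obtain ⟨w, hw, hmk⟩ := c.2
        exact ⟨w, esupp_sub_insert hw, by rw [← hmk, hq]⟩⟩ :
      {c : (fromEdgeSet (insert s(u,v) F)).ConnectedComponent //
        ∃ w ∈ esupp (insert s(u,v) F),
          (fromEdgeSet (insert s(u,v) F)).connectedComponentMk w = c})) ?_
  intro c c' hcc
  have hq12 : q c.1 = q c'.1 := by
    have := congrArg Subtype.val hcc
    simpa using this
  have hcv : c.1 ≠ (fromEdgeSet F).connectedComponentMk v := by
    obtain ⟨w, hw, hmk⟩ := c.2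
    rw [← hmk]; exact wit_ne hv hw
  have hcv' : c'.1 ≠ (fromEdgeSet F).connectedComponentMk v := by
    obtain ⟨w, hw, hmk⟩ := c'.2
    rw [← hmk]; exact wit_ne hv hw
  rcases hqinj _ _ hq12 with h | ⟨ha, hb⟩ | ⟨ha, hb⟩
  · exact Subtype.ext h
  · exact absurd hb hcv'
  · exact absurd ha hcv

lemma step_case3 [Fintype V] {F : Set (Sym2 V)} {u v : V}
    (hu : u ∉ esupp F) (hv : v ∉ esupp F) :
    ncomp F (esupp F) + 1 ≤ ncomp (insert s(u,v) F) (esupp (insert s(u,v) F)) := by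
  classical
  obtain ⟨q, hq, hqinj⟩ := exists_q (F := F) (u := u) (v := v)
  have hu1 : u ∈ esupp (insert s(u,v) F) :=
    ⟨s(u,v), Set.mem_insert _ _, Sym2.mem_mk_left _ _⟩
  have key : Nat.card ({c : (fromEdgeSet F).ConnectedComponent //
      ∃ w ∈ esupp F, (fromEdgeSet F).connectedComponentMk w = c} ⊕ Unit) ≤
      ncomp (insert s(u,v) F) (esupp (insert s(u,v) F)) := by
    refine Nat.card_le_card_of_injective (fun x => match x with
      | Sum.inl c => (⟨q c.1, by
          obtain ⟨w, hw, hmk⟩ := c.2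
          exact ⟨w, esupp_sub_insert hw, by rw [← hmk, hq]⟩⟩ :
        {c : (fromEdgeSet (insert s(u,v) F)).ConnectedComponent //
          ∃ w ∈ esupp (insert s(u,v) F),
            (fromEdgeSet (insert s(u,v) F)).connectedComponentMk w = c})
      | Sum.inr _ => ⟨(fromEdgeSet (insert s(u,v) F)).connectedComponentMk u,
          ⟨u, hu1, rfl⟩⟩) ?_
    have hcu : ∀ c : {c : (fromEdgeSet F).ConnectedComponent //
        ∃ w ∈ esupp F, (fromEdgeSet F).connectedComponentMk w = c},
        q c.1 ≠ (fromEdgeSet (insert s(u,v) F)).connectedComponentMk u := by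
      intro c hcon
      obtain ⟨w, hw, hmk⟩ := c.2
      rw [← hmk, hq] at hcon
      rcases hqinj ((fromEdgeSet F).connectedComponentMk w)
          ((fromEdgeSet F).connectedComponentMk u) (by rw [hq, hq]; exact hcon) with
        h | ⟨ha, hb⟩ | ⟨ha, hb⟩
      · exact wit_ne hu hw h
      · exact wit_ne hu hw ha
      · exact wit_ne hv hw ha
    rintro (c | x) (c' | x') hcc
    · have hq12 : q c.1 = q c'.1 := by
        have := congrArg Subtype.val hcc
        simpa using this
      have hcv : c.1 ≠ (fromEdgeSet F).connectedComponentMk v := by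
        obtain ⟨w, hw, hmk⟩ := c.2
        rw [← hmk]; exact wit_ne hv hw
      have hcu' : c.1 ≠ (fromEdgeSet F).connectedComponentMk u := by
        obtain ⟨w, hw, hmk⟩ := c.2
        rw [← hmk]; exact wit_ne hu hw
      rcases hqinj _ _ hq12 with h | ⟨ha, hb⟩ | ⟨ha, hb⟩
      · exact congrArg Sum.inl (Subtype.ext h)
      · exact absurd ha hcu'
      · exact absurd ha hcv
    · exact absurd (congrArg Subtype.val hcc) (hcu c)
    · exact absurd (congrArg Subtype.val hcc).symm (hcu c')
    · cases x; cases x'; rfl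
  rw [Nat.card_sum, Nat.card_eq_fintype_card (α := Unit), Fintype.card_punit] at key
  exact key

/-- Key counting lemma: `|esupp F| ≤ ncomp F (esupp F) + |F|`. -/
lemma card_esupp_le [Fintype V] (F : Set (Sym2 V)) :
    Nat.card (esupp F) ≤ ncomp F (esupp F) + Nat.card F := by
  classical
  refine Set.Finite.induction_on
    (motive := fun F _ => Nat.card (esupp F) ≤ ncomp F (esupp F) + Nat.card F)
    F (Set.toFinite F) ?_ ?_
  · have h : esupp (∅ : Set (Sym2 V)) = ∅ := by simp [esupp]
    show Nat.card (esupp (∅ : Set (Sym2 V))) ≤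
      ncomp ∅ (esupp (∅ : Set (Sym2 V))) + Nat.card (∅ : Set (Sym2 V))
    rw [h]
    simp [Nat.card_coe_set_eq]
  · intro e F he hFfin ih
    beta_reduce
    beta_reduce at ih
    induction e using Sym2.ind with
    | _ u v =>
    have hcard_ins : Nat.card ↥(insert s(u,v) F) = Nat.card ↥F + 1 := by
      rw [Nat.card_coe_set_eq, Nat.card_coe_set_eq,
        Set.ncard_insert_of_notMem he]
    have hes : esupp (insert s(u,v) F) = insert u (insert v (esupp F)) := esupp_insert
    by_cases huv : u = v
    · subst huv
      have hg : fromEdgeSet (insert s(u,u) F) = fromEdgeSet F := by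
        ext a b
        simp only [fromEdgeSet_adj, Set.mem_insert_iff]
        constructor
        · rintro ⟨h1 | h1, h2⟩
          · rw [Sym2.eq_iff] at h1
            rcases h1 with ⟨rfl, rfl⟩ | ⟨rfl, rfl⟩ <;> exact absurd rfl h2
          · exact ⟨h1, h2⟩
        · exact fun ⟨h1, h2⟩ => ⟨Or.inr h1, h2⟩
      have h1 : ncomp (insert s(u,u) F) (esupp (insert s(u,u) F)) =
          ncomp F (esupp (insert s(u,u) F)) := by
        unfold ncomp
        rw [hg]
      have h2 : ncomp F (esupp F) ≤ ncomp F (esupp (insert s(u,u) F)) :=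
        ncomp_mono_S F esupp_sub_insert
      have h3 : Nat.card ↥(esupp (insert s(u,u) F)) ≤ Nat.card ↥(esupp F) + 1 := by
        rw [hes, Set.insert_idem, Nat.card_coe_set_eq, Nat.card_coe_set_eq]
        exact Set.ncard_insert_le _ _
      omega
    · by_cases hu : u ∈ esupp F <;> by_cases hv : v ∈ esupp F
      · have h1 := step_case1 (F := F) hu hv
        have h3 : Nat.card ↥(esupp (insert s(u,v) F)) = Nat.card ↥(esupp F) := by
          rw [hes, Set.insert_eq_of_mem hv, Set.insert_eq_of_mem hu]
        omega
      · have h1 := step_case2 (F := F) (u := u) hv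
        have h3 : Nat.card ↥(esupp (insert s(u,v) F)) ≤ Nat.card ↥(esupp F) + 1 := by
          rw [hes, Set.insert_eq_of_mem (Set.mem_insert_iff.mpr (Or.inr hu)),
            Nat.card_coe_set_eq, Nat.card_coe_set_eq]
          exact Set.ncard_insert_le _ _
        omega
      · have h1 := step_case2 (F := F) (u := v) hu
        rw [Sym2.eq_swap (a := v) (b := u)] at h1
        have h3 : Nat.card ↥(esupp (insert s(u,v) F)) ≤ Nat.card ↥(esupp F) + 1 := by
          rw [hes, Set.insert_comm, Set.insert_eq_of_mem (Set.mem_insert_iff.mpr (Or.inr hv)),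
            Nat.card_coe_set_eq, Nat.card_coe_set_eq]
          exact Set.ncard_insert_le _ _
        omega
      · have h1 := step_case3 (F := F) hu hv
        have h3 : Nat.card ↥(esupp (insert s(u,v) F)) ≤ Nat.card ↥(esupp F) + 2 := by
          rw [hes, Nat.card_coe_set_eq, Nat.card_coe_set_eq]
          calc (insert u (insert v (esupp F))).ncard ≤ (insert v (esupp F)).ncard + 1 :=
                Set.ncard_insert_le _ _
            _ ≤ (esupp F).ncard + 1 + 1 := by
                have := Set.ncard_insert_le v (esupp F)
                omega
        omega

end helpers

/-- if contracting `F` makes `G` bipartite, then the set `F'` of edges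
of `G` whose endpoints lie in the same component of `G[F]` satisfies `r(F') ≤ |F|`
and `G \ F'` is bipartite. -/
theorem stmt1 {V : Type*} [Fintype V] (G : SimpleGraph V) (F : Set (Sym2 V))
    (hF : F ⊆ G.edgeSet) (hbip : (contractE G F).Colorable 2) :
    erank {e ∈ G.edgeSet | ∃ u v, e = s(u, v) ∧ u ∈ esupp F ∧ v ∈ esupp F ∧
        (SimpleGraph.fromEdgeSet F).Reachable u v} ≤ Nat.card F ∧
    (G.deleteEdges {e ∈ G.edgeSet | ∃ u v, e = s(u, v) ∧ u ∈ esupp F ∧ v ∈ esupp F ∧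
        (SimpleGraph.fromEdgeSet F).Reachable u v}).Colorable 2 := by
  classical
  set F' : Set (Sym2 V) := {e ∈ G.edgeSet | ∃ u v, e = s(u, v) ∧ u ∈ esupp F ∧ v ∈ esupp F ∧
        (SimpleGraph.fromEdgeSet F).Reachable u v} with hF'def
  have hsub : F ⊆ F' := by
    intro e he
    have heG := hF he
    refine ⟨heG, ?_⟩
    induction e using Sym2.ind with
    | _ a b =>
      have hadj : G.Adj a b := (SimpleGraph.mem_edgeSet G).mp heG
      exact ⟨a, b, rfl, ⟨s(a,b), he, Sym2.mem_mk_left _ _⟩,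
        ⟨s(a,b), he, Sym2.mem_mk_right _ _⟩,
        ((SimpleGraph.fromEdgeSet_adj _).mpr ⟨he, hadj.ne⟩).reachable⟩
  have hesupp : esupp F' = esupp F := by
    apply Set.Subset.antisymm
    · rintro w ⟨e, ⟨heG, u', v', rfl, hu', hv', hr⟩, hw⟩
      rcases Sym2.mem_iff.mp hw with rfl | rfl
      exacts [hu', hv']
    · exact fun w ⟨e, he, hw⟩ => ⟨e, hsub he, hw⟩
  have hG0le : SimpleGraph.fromEdgeSet F ≤ SimpleGraph.fromEdgeSet F' :=
    SimpleGraph.fromEdgeSet_mono hsub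
  have hF'reach : ∀ x y : V, (SimpleGraph.fromEdgeSet F').Reachable x y →
      (SimpleGraph.fromEdgeSet F).Reachable x y := by
    intro x y
    refine reach_of_adj_reach (fun a b hab => ?_)
    rw [SimpleGraph.fromEdgeSet_adj] at hab
    obtain ⟨⟨haG, u', v', heq, hu', hv', hr⟩, hne⟩ := hab
    rcases Sym2.eq_iff.mp heq with ⟨rfl, rfl⟩ | ⟨rfl, rfl⟩
    · exact hr
    · exact hr.symm
  let q' : (SimpleGraph.fromEdgeSet F').ConnectedComponent →
      (SimpleGraph.fromEdgeSet F).ConnectedComponent :=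
    SimpleGraph.ConnectedComponent.lift
      (fun w => (SimpleGraph.fromEdgeSet F).connectedComponentMk w)
      (fun a b p _ => SimpleGraph.ConnectedComponent.sound (hF'reach _ _ p.reachable))
  have hq' : ∀ w, q' ((SimpleGraph.fromEdgeSet F').connectedComponentMk w) =
      (SimpleGraph.fromEdgeSet F).connectedComponentMk w := fun _ => rfl
  have hq'inj : ∀ c c', q' c = q' c' → c = c' := by
    intro c c'
    refine SimpleGraph.ConnectedComponent.ind₂ (fun x y h => ?_) c c'
    exact SimpleGraph.ConnectedComponent.sound
      ((SimpleGraph.ConnectedComponent.eq.mp h).mono hG0le)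
  have hncomp : ncomp F' (esupp F') = ncomp F (esupp F) := by
    rw [hesupp]
    apply Nat.card_eq_of_bijective (f := fun c => (⟨q' c.1, by
        obtain ⟨w, hw, hmk⟩ := c.2
        exact ⟨w, hw, by rw [← hmk, hq']⟩⟩ :
      {c : (SimpleGraph.fromEdgeSet F).ConnectedComponent //
        ∃ v ∈ esupp F, (SimpleGraph.fromEdgeSet F).connectedComponentMk v = c}))
    constructor
    · intro c c' hcc
      have : q' c.1 = q' c'.1 := by
        have := congrArg Subtype.val hcc
        simpa using this
      exact Subtype.ext (hq'inj _ _ this)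
    · rintro ⟨c, w, hw, hmk⟩
      exact ⟨⟨(SimpleGraph.fromEdgeSet F').connectedComponentMk w, ⟨w, hw, rfl⟩⟩,
        Subtype.ext (show q' ((SimpleGraph.fromEdgeSet F').connectedComponentMk w) = c by
          rw [hq', hmk])⟩
  constructor
  · show erank F' ≤ Nat.card F
    unfold erank
    rw [hncomp, hesupp]
    have := card_esupp_le F
    omega
  · obtain ⟨col⟩ := hbip
    refine ⟨SimpleGraph.Coloring.mk
      (fun v => col ((SimpleGraph.fromEdgeSet F).connectedComponentMk v)) ?_⟩
    intro a b hab
    rw [SimpleGraph.deleteEdges_adj] at hab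
    obtain ⟨hGab, hnot⟩ := hab
    have hne : (SimpleGraph.fromEdgeSet F).connectedComponentMk a ≠
        (SimpleGraph.fromEdgeSet F).connectedComponentMk b := by
      intro h
      have hr : (SimpleGraph.fromEdgeSet F).Reachable a b :=
        SimpleGraph.ConnectedComponent.eq.mp h
      have haS : a ∈ esupp F := by
        by_contra hc
        exact hGab.ne (isolated_reach hc hr)
      have hbS : b ∈ esupp F := by
        by_contra hc
        exact hGab.ne' (isolated_reach hc hr.symm)
      exact hnot ⟨(SimpleGraph.mem_edgeSet G).mpr hGab, a, b, rfl, haS, hbS, hr⟩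
    have hadj : (contractE G F).Adj ((SimpleGraph.fromEdgeSet F).connectedComponentMk a)
        ((SimpleGraph.fromEdgeSet F).connectedComponentMk b) := by
      rw [contractE, SimpleGraph.fromRel_adj]
      exact ⟨hne, Or.inl ⟨a, b, hGab, rfl, rfl⟩⟩
    exact col.valid hadj
end

section
/- Let G be a finite simple graph and F a minimal set of edges such that G \ F is bipartite, witnessed by a proper 2-coloring c of G \ F. Then every two vertices lying in the same connected component of G[F] receive the same color under c. -/
/-- if `F` is a minimal edge set such that `G \ F` is bipartite,
witnessed by a proper 2-coloring `c` of `G \ F`, then any two vertices in the same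
connected component of `G[F]` (i.e. joined by a path using only edges of `F`)
receive the same color under `c`. -/
theorem stmt2 {V : Type*} [Fintype V] (G : SimpleGraph V) (F : Set (Sym2 V))
    (hF : F ⊆ G.edgeSet)
    (c : V → Fin 2) (hc : ∀ u v, (G.deleteEdges F).Adj u v → c u ≠ c v)
    (hmin : ∀ F'' ⊂ F, ¬ (G.deleteEdges F'').Colorable 2)
    (u v : V) (h : (SimpleGraph.fromEdgeSet F).Reachable u v) : c u = c v := by
  -- First: every edge of F joins equally-colored vertices.
  have key : ∀ a b : V, s(a, b) ∈ F → c a = c b := by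
    intro a b hab
    by_contra hne
    have hsub : F \ {s(a, b)} ⊂ F := by
      constructor
      · exact Set.diff_subset
      · intro hsup
        have := hsup hab
        simp at this
    apply hmin _ hsub
    refine ⟨SimpleGraph.Coloring.mk c ?_⟩
    intro x y hxy
    rw [SimpleGraph.deleteEdges_adj] at hxy
    rcases hxy with ⟨hG, hnot⟩
    by_cases hxyF : s(x, y) ∈ F
    · have : s(x, y) = s(a, b) := by
        by_contra hne2
        exact hnot ⟨hxyF, hne2⟩
      rw [Sym2.eq_iff] at this
      rcases this with ⟨rfl, rfl⟩ | ⟨rfl, rfl⟩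
      · exact hne
      · exact fun h' => hne h'.symm
    · exact hc x y (by rw [SimpleGraph.deleteEdges_adj]; exact ⟨hG, hxyF⟩)
  obtain ⟨w⟩ := h
  induction w with
  | nil => rfl
  | cons hadj _ ih =>
    have := key _ _ ((SimpleGraph.fromEdgeSet_adj _).mp hadj).1
    exact this.trans ih
end
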